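/- For the empirical logistic loss with normalized features, the largest eigenvalue of the Hessian H(w) is bounded by min{1/4, L(w)} for every w; in particular L is (1/4)-smooth. -/

import Mathlib

open scoped Matrix
/-- Hessian bound for the empirical logistic loss with normalized features:
the quadratic form of `H(w) = (1/n) ∑ i, σ_i (1-σ_i) x_i x_iᵀ`
(with `σ_i = 1/(1+exp(y_i⟨x_i,w⟩))`) is bounded by `min {1/4, L(w)}·‖v‖²`
for every direction `v`, i.e. `λ_max(H(w)) ≤ min {1/4, L(w)}`;
in particular `L` is `(1/4)`-smooth. -/
theorem stmt_4 {d n : ℕ} (hn : 1 ≤ n) (x : Fin n → Fin d → ℝ)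
    (y : Fin n → ℝ) (hy : ∀ i, y i = 1 ∨ y i = -1)
    (hx : ∀ i, ∑ j, (x i j) ^ 2 ≤ 1) (w : Fin d → ℝ) :
    ∀ v : Fin d → ℝ,
      v ⬝ᵥ ((1 / (n : ℝ)) •
          ∑ i, ((1 / (1 + Real.exp (y i * (x i ⬝ᵥ w)))) *
              (1 - 1 / (1 + Real.exp (y i * (x i ⬝ᵥ w))))) •
            Matrix.vecMulVec (x i) (x i)).mulVec v
        ≤ min (1 / 4)
            ((1 / (n : ℝ)) * ∑ i, Real.log (1 + Real.exp (-(y i * (x i ⬝ᵥ w)))))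
          * (v ⬝ᵥ v) := by
  intro v
  set t : Fin n → ℝ := fun i => y i * (x i ⬝ᵥ w) with ht
  set s : Fin n → ℝ := fun i =>
    (1 / (1 + Real.exp (t i))) * (1 - 1 / (1 + Real.exp (t i))) with hsdef
  -- quadratic form identity
  have hquad : v ⬝ᵥ ((1 / (n : ℝ)) • ∑ i, s i • Matrix.vecMulVec (x i) (x i)).mulVec v
      = (1 / (n : ℝ)) * ∑ i, s i * (x i ⬝ᵥ v) ^ 2 := by
    simp only [Matrix.mulVec, Matrix.vecMulVec_apply, dotProduct, Finset.sum_apply,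
      Pi.smul_apply, smul_eq_mul, Finset.mul_sum, Finset.sum_mul, Matrix.smul_apply,
      Matrix.sum_apply, sq]
    rw [Finset.sum_congr rfl fun j _ => Finset.sum_comm ..]
    rw [Finset.sum_comm]
    refine Finset.sum_congr rfl fun i _ => ?_
    rw [Finset.sum_comm]
    exact Finset.sum_congr rfl fun k _ => Finset.sum_congr rfl fun j _ => by ring
  rw [hquad]
  have hvv : (0:ℝ) ≤ v ⬝ᵥ v := by
    simp only [dotProduct]
    exact Finset.sum_nonneg fun j _ => mul_self_nonneg _
  -- basic facts about s
  have hspos : ∀ i, (0:ℝ) ≤ s i := by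
    intro i
    have h1 : (0:ℝ) < 1 + Real.exp (t i) := by positivity
    have h2 : 1 / (1 + Real.exp (t i)) ≤ 1 := by
      rw [div_le_one h1]; nlinarith [Real.exp_pos (t i)]
    have h3 : (0:ℝ) < 1 / (1 + Real.exp (t i)) := by positivity
    simp only [hsdef]
    nlinarith
  have hs4 : ∀ i, s i ≤ 1 / 4 := by
    intro i
    have h1 : (0:ℝ) < 1 + Real.exp (t i) := by positivity
    have h2 : 1 / (1 + Real.exp (t i)) ≤ 1 := by
      rw [div_le_one h1]; nlinarith [Real.exp_pos (t i)]
    have h3 : (0:ℝ) < 1 / (1 + Real.exp (t i)) := by positivity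
    simp only [hsdef]
    nlinarith [sq_nonneg (1 / (1 + Real.exp (t i)) - 1/2)]
  have hslog : ∀ i, s i ≤ Real.log (1 + Real.exp (-(t i))) := by
    intro i
    have hu : (0:ℝ) < Real.exp (-(t i)) := Real.exp_pos _
    have h1 : (0:ℝ) < 1 + Real.exp (-(t i)) := by linarith
    have h1' : (0:ℝ) < 1 + Real.exp (t i) := by positivity
    -- σ ≤ log(1+e^{-t}) using log x ≤ x - 1 applied to 1/(1+e^{-t})
    have hlog : 1 - 1 / (1 + Real.exp (-(t i))) ≤ Real.log (1 + Real.exp (-(t i))) := by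
      have := Real.log_le_sub_one_of_pos (show (0:ℝ) < 1 / (1 + Real.exp (-(t i))) by positivity)
      rw [Real.log_div one_ne_zero (ne_of_gt h1), Real.log_one] at this
      linarith
    -- σ = 1/(1+e^t) = 1 - 1/(1+e^{-t})
    have hmul : Real.exp (t i) * Real.exp (-(t i)) = 1 := by
      rw [← Real.exp_add]; simp
    have hsig : 1 / (1 + Real.exp (t i)) = 1 - 1 / (1 + Real.exp (-(t i))) := by
      rw [eq_sub_iff_add_eq]
      field_simp
      nlinarith [hmul]
    -- s i ≤ σ
    have h2 : 1 - 1 / (1 + Real.exp (t i)) ≤ 1 := by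
      have : (0:ℝ) < 1 / (1 + Real.exp (t i)) := by positivity
      linarith
    have h3 : (0:ℝ) ≤ 1 / (1 + Real.exp (t i)) := by positivity
    calc s i ≤ 1 / (1 + Real.exp (t i)) * 1 := by
              simp only [hsdef]; exact mul_le_mul_of_nonneg_left h2 h3
      _ = 1 / (1 + Real.exp (t i)) := mul_one _
      _ = 1 - 1 / (1 + Real.exp (-(t i))) := hsig
      _ ≤ Real.log (1 + Real.exp (-(t i))) := hlog
  -- Cauchy–Schwarz: (x i ⬝ᵥ v)^2 ≤ v ⬝ᵥ v
  have hcs : ∀ i, (x i ⬝ᵥ v) ^ 2 ≤ v ⬝ᵥ v := by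
    intro i
    have hCS := Finset.sum_mul_sq_le_sq_mul_sq Finset.univ (x i) v
    have hv2 : v ⬝ᵥ v = ∑ j, v j ^ 2 := by
      simp [dotProduct, sq]
    have hx2 : x i ⬝ᵥ v = ∑ j, x i j * v j := rfl
    rw [hx2, hv2]
    calc (∑ j, x i j * v j) ^ 2 ≤ (∑ j, x i j ^ 2) * ∑ j, v j ^ 2 := hCS
      _ ≤ 1 * ∑ j, v j ^ 2 := by
          apply mul_le_mul_of_nonneg_right (hx i)
          exact Finset.sum_nonneg fun j _ => sq_nonneg _
      _ = ∑ j, v j ^ 2 := one_mul _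
  -- combine
  have hterm : ∀ (m : Fin n → ℝ), (∀ i, s i ≤ m i) →
      (1 / (n:ℝ)) * ∑ i, s i * (x i ⬝ᵥ v) ^ 2 ≤ (1 / (n:ℝ)) * ∑ i, m i * (v ⬝ᵥ v) := by
    intro m hm
    apply mul_le_mul_of_nonneg_left _ (by positivity)
    apply Finset.sum_le_sum
    intro i _
    calc s i * (x i ⬝ᵥ v) ^ 2 ≤ s i * (v ⬝ᵥ v) :=
          mul_le_mul_of_nonneg_left (hcs i) (hspos i)
      _ ≤ m i * (v ⬝ᵥ v) := mul_le_mul_of_nonneg_right (hm i) hvv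
  have hn' : (0:ℝ) < n := by exact_mod_cast Nat.lt_of_lt_of_le Nat.zero_lt_one hn
  rw [min_mul_of_nonneg _ _ hvv, le_min_iff]
  constructor
  · calc (1 / (n:ℝ)) * ∑ i, s i * (x i ⬝ᵥ v) ^ 2
        ≤ (1 / (n:ℝ)) * ∑ i, (1/4 : ℝ) * (v ⬝ᵥ v) := hterm (fun _ => 1/4) hs4
      _ = 1 / 4 * (v ⬝ᵥ v) := by
          rw [Finset.sum_const, Finset.card_univ, Fintype.card_fin, nsmul_eq_mul]
          field_simp
  · calc (1 / (n:ℝ)) * ∑ i, s i * (x i ⬝ᵥ v) ^ 2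
        ≤ (1 / (n:ℝ)) * ∑ i, Real.log (1 + Real.exp (-(t i))) * (v ⬝ᵥ v) :=
          hterm _ hslog
      _ = (1 / (n:ℝ)) * ∑ i, Real.log (1 + Real.exp (-(t i))) * (v ⬝ᵥ v) := rfl
      _ = ((1 / (n:ℝ)) * ∑ i, Real.log (1 + Real.exp (-(t i)))) * (v ⬝ᵥ v) := by
          rw [← Finset.sum_mul, mul_assoc]
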